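/- Under up-to-propositional-equivalence state identification, the forward search space for LTLf synthesis is doubly exponentially bounded: for an LTLf formula φ, every state formula ψ reachable from φ by repeated progression satisfies that xnf(ψ)^p is a Boolean function over at most |cl(φ)| variables, hence the number of reachable states distinct up to propositional equivalence is at most 2^(2^|cl(φ)|). -/

import Mathlib

namespace LTLfSynth

open scoped Classical

/-- LTLf formulas in negation normal form. -/
inductive LTLf (P : Type*) where
  | tt : LTLf P
  | ff : LTLf P
  | atom : P → LTLf P
  | natom : P → LTLf P
  | and : LTLf P → LTLf P → LTLf P
  | or : LTLf P → LTLf P → LTLf P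
  | next : LTLf P → LTLf P
  | wnext : LTLf P → LTLf P
  | until_ : LTLf P → LTLf P → LTLf P
  | release : LTLf P → LTLf P → LTLf P

variable {P : Type*}

/-- ◇true -/
def diamondTrue : LTLf P := .until_ .tt .tt

/-- □false -/
def boxFalse : LTLf P := .release .ff .ff

/-- Finite-trace satisfaction `ρ, i ⊨ φ`, where position `ρ.length` (and beyond)
corresponds to the empty suffix (empty-trace semantics). -/
def Sat (ρ : List (Set P)) : LTLf P → ℕ → Prop
  | .tt, _ => True
  | .ff, _ => False
  | .atom p, i => i < ρ.length ∧ p ∈ ρ.getD i ∅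
  | .natom p, i => i < ρ.length ∧ p ∉ ρ.getD i ∅
  | .and φ ψ, i => Sat ρ φ i ∧ Sat ρ ψ i
  | .or φ ψ, i => Sat ρ φ i ∨ Sat ρ ψ i
  | .next φ, i => i + 1 < ρ.length ∧ Sat ρ φ (i + 1)
  | .wnext φ, i => i + 1 < ρ.length → Sat ρ φ (i + 1)
  | .until_ φ ψ, i =>
      ∃ j, i ≤ j ∧ j < ρ.length ∧ Sat ρ ψ j ∧ ∀ k, i ≤ k → k < j → Sat ρ φ k
  | .release φ ψ, i =>
      ∀ j, i ≤ j → j < ρ.length → (Sat ρ ψ j ∨ ∃ k, i ≤ k ∧ k < j ∧ Sat ρ φ k)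

/-- Single-step formula progression `fp σ φ = fp(φ, σ)`. -/
noncomputable def fp (σ : Set P) : LTLf P → LTLf P
  | .tt => .tt
  | .ff => .ff
  | .atom p => if p ∈ σ then .tt else .ff
  | .natom p => if p ∈ σ then .ff else .tt
  | .and φ ψ => .and (fp σ φ) (fp σ ψ)
  | .or φ ψ => .or (fp σ φ) (fp σ ψ)
  | .next φ => .and φ diamondTrue
  | .wnext φ => .or φ boxFalse
  | .until_ .tt .tt => .tt
  | .until_ φ ψ => .or (fp σ ψ) (.and (fp σ φ) (.and (.until_ φ ψ) diamondTrue))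
  | .release .ff .ff => .ff
  | .release φ ψ => .and (fp σ ψ) (.or (fp σ φ) (.or (.release φ ψ) boxFalse))

/-- Progression extended to finite traces: `fpTrace φ ε = φ`, `fpTrace φ (σu) = fpTrace (fp σ φ) u`. -/
noncomputable def fpTrace : LTLf P → List (Set P) → LTLf P
  | φ, [] => φ
  | φ, σ :: u => fpTrace (fp σ φ) u

/-- Subformulas of a formula (including the formula itself). -/
def subf : LTLf P → Set (LTLf P)
  | .and φ ψ => insert (.and φ ψ) (subf φ ∪ subf ψ)
  | .or φ ψ => insert (.or φ ψ) (subf φ ∪ subf ψ)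
  | .next φ => insert (.next φ) (subf φ)
  | .wnext φ => insert (.wnext φ) (subf φ)
  | .until_ φ ψ => insert (.until_ φ ψ) (subf φ ∪ subf ψ)
  | .release φ ψ => insert (.release φ ψ) (subf φ ∪ subf ψ)
  | φ => {φ}

/-- The closure of `φ`: subformulas of `φ`, enriched with `◇true`, `□false`, `true`, `false`. -/
def cl (φ : LTLf P) : Set (LTLf P) :=
  subf φ ∪ subf diamondTrue ∪ subf boxFalse ∪ {LTLf.tt, LTLf.ff}

/-- Propositional evaluation of a formula, treating its propositional atoms
(literals and temporal subformulas) as opaque propositional variables valued by `v`. -/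
def PropEval (v : LTLf P → Prop) : LTLf P → Prop
  | .tt => True
  | .ff => False
  | .and φ ψ => PropEval v φ ∧ PropEval v ψ
  | .or φ ψ => PropEval v φ ∨ PropEval v ψ
  | φ => v φ

/-- Propositional equivalence `φ ∼p ψ`. -/
def PropEquiv (φ ψ : LTLf P) : Prop :=
  ∀ v : LTLf P → Prop, PropEval v φ ↔ PropEval v ψ

/-! ### Auxiliary machinery -/

/-- The propositional atoms of a formula: the leaves of its propositional structure. -/
def atoms : LTLf P → Set (LTLf P)
  | .tt => ∅
  | .ff => ∅
  | .and φ ψ => atoms φ ∪ atoms ψ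
  | .or φ ψ => atoms φ ∪ atoms ψ
  | χ => {χ}

lemma propEval_congr (v w : LTLf P → Prop) :
    ∀ χ : LTLf P, (∀ a ∈ atoms χ, v a ↔ w a) → (PropEval v χ ↔ PropEval w χ) := by
  intro χ
  induction χ with
  | tt => simp [PropEval]
  | ff => simp [PropEval]
  | atom p => intro h; exact h _ (by simp [atoms])
  | natom p => intro h; exact h _ (by simp [atoms])
  | and a b iha ihb =>
      intro h
      simp only [PropEval, atoms] at *
      rw [iha fun x hx => h x (Or.inl hx), ihb fun x hx => h x (Or.inr hx)]
  | or a b iha ihb =>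
      intro h
      simp only [PropEval, atoms] at *
      rw [iha fun x hx => h x (Or.inl hx), ihb fun x hx => h x (Or.inr hx)]
  | next a _ => intro h; exact h _ (by simp [atoms])
  | wnext a _ => intro h; exact h _ (by simp [atoms])
  | until_ a b _ _ => intro h; exact h _ (by simp [atoms])
  | release a b _ _ => intro h; exact h _ (by simp [atoms])

lemma mem_subf_self (χ : LTLf P) : χ ∈ subf χ := by
  cases χ <;> simp [subf]

lemma atoms_subset_subf (χ : LTLf P) : atoms χ ⊆ subf χ := by
  induction χ with
  | and a b iha ihb =>
      simp only [atoms, subf]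
      exact Set.union_subset (iha.trans (by intro x hx; simp [hx]))
        (ihb.trans (by intro x hx; simp [hx]))
  | or a b iha ihb =>
      simp only [atoms, subf]
      exact Set.union_subset (iha.trans (by intro x hx; simp [hx]))
        (ihb.trans (by intro x hx; simp [hx]))
  | _ => first
      | (intro x hx; simp only [atoms, Set.mem_singleton_iff] at hx; subst hx;
         exact mem_subf_self _)
      | simp [atoms]

lemma subf_trans : ∀ χ a : LTLf P, a ∈ subf χ → subf a ⊆ subf χ := by
  intro χ
  induction χ with
  | and x y ihx ihy =>
      intro a ha
      simp only [subf, Set.mem_insert_iff, Set.mem_union] at ha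
      rcases ha with rfl | ha | ha
      · exact subset_rfl
      · exact (ihx a ha).trans (by intro z hz; simp [subf, hz])
      · exact (ihy a ha).trans (by intro z hz; simp [subf, hz])
  | or x y ihx ihy =>
      intro a ha
      simp only [subf, Set.mem_insert_iff, Set.mem_union] at ha
      rcases ha with rfl | ha | ha
      · exact subset_rfl
      · exact (ihx a ha).trans (by intro z hz; simp [subf, hz])
      · exact (ihy a ha).trans (by intro z hz; simp [subf, hz])
  | next x ihx =>
      intro a ha
      simp only [subf, Set.mem_insert_iff] at ha
      rcases ha with rfl | ha
      · exact subset_rfl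
      · exact (ihx a ha).trans (by intro z hz; simp [subf, hz])
  | wnext x ihx =>
      intro a ha
      simp only [subf, Set.mem_insert_iff] at ha
      rcases ha with rfl | ha
      · exact subset_rfl
      · exact (ihx a ha).trans (by intro z hz; simp [subf, hz])
  | until_ x y ihx ihy =>
      intro a ha
      simp only [subf, Set.mem_insert_iff, Set.mem_union] at ha
      rcases ha with rfl | ha | ha
      · exact subset_rfl
      · exact (ihx a ha).trans (by intro z hz; simp [subf, hz])
      · exact (ihy a ha).trans (by intro z hz; simp [subf, hz])
  | release x y ihx ihy =>
      intro a ha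
      simp only [subf, Set.mem_insert_iff, Set.mem_union] at ha
      rcases ha with rfl | ha | ha
      · exact subset_rfl
      · exact (ihx a ha).trans (by intro z hz; simp [subf, hz])
      · exact (ihy a ha).trans (by intro z hz; simp [subf, hz])
  | _ =>
      intro a ha
      simp only [subf, Set.mem_singleton_iff] at ha
      subst ha; exact subset_rfl

lemma subf_finite (χ : LTLf P) : (subf χ).Finite := by
  induction χ <;> simp only [subf] <;>
    first
      | exact Set.finite_singleton _
      | exact ((Set.Finite.union (by assumption) (by assumption)).insert _)
      | exact (Set.Finite.insert _ (by assumption))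

lemma cl_finite (φ : LTLf P) : (cl φ).Finite := by
  unfold cl
  exact (((subf_finite φ).union (subf_finite _)).union (subf_finite _)).union
    ((Set.finite_singleton _).insert _)

lemma subf_subset_cl (φ : LTLf P) : ∀ a ∈ cl φ, subf a ⊆ cl φ := by
  intro a ha
  simp only [cl, Set.mem_union, Set.mem_insert_iff, Set.mem_singleton_iff] at ha
  rcases ha with ((ha | ha) | ha) | rfl | rfl
  · exact (subf_trans _ _ ha).trans (by intro z hz; simp [cl, hz])
  · exact (subf_trans _ _ ha).trans (by intro z hz; simp [cl, hz])
  · exact (subf_trans _ _ ha).trans (by intro z hz; simp [cl, hz])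
  · intro z hz; simp only [subf, Set.mem_singleton_iff] at hz; subst hz; simp [cl]
  · intro z hz; simp only [subf, Set.mem_singleton_iff] at hz; subst hz; simp [cl]

lemma dt_subset_cl (φ : LTLf P) : subf (diamondTrue : LTLf P) ⊆ cl φ := by
  intro z hz; simp [cl, hz]

lemma bf_subset_cl (φ : LTLf P) : subf (boxFalse : LTLf P) ⊆ cl φ := by
  intro z hz; simp [cl, hz]

lemma fp_until_ne (σ : Set P) (a b : LTLf P) (h : ¬(a = .tt ∧ b = .tt)) :
    fp σ (.until_ a b) =
      .or (fp σ b) (.and (fp σ a) (.and (.until_ a b) diamondTrue)) := by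
  cases a <;> cases b <;> simp_all [fp]

lemma fp_release_ne (σ : Set P) (a b : LTLf P) (h : ¬(a = .ff ∧ b = .ff)) :
    fp σ (.release a b) =
      .and (fp σ b) (.or (fp σ a) (.or (.release a b) boxFalse)) := by
  cases a <;> cases b <;> simp_all [fp]

/-- Key lemma: progression keeps atoms inside any `subf`-closed set containing
`subf ◇true` and `subf □false`. -/
lemma atoms_fp_subset (σ : Set P) (S : Set (LTLf P))
    (hclosed : ∀ a ∈ S, subf a ⊆ S)
    (hdt : subf (diamondTrue : LTLf P) ⊆ S)
    (hbf : subf (boxFalse : LTLf P) ⊆ S) :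
    ∀ χ : LTLf P, atoms χ ⊆ S → atoms (fp σ χ) ⊆ S := by
  intro χ
  induction χ with
  | tt => intro _; simp [fp, atoms]
  | ff => intro _; simp [fp, atoms]
  | atom p =>
      intro _
      by_cases hp : p ∈ σ <;> simp [fp, hp, atoms]
  | natom p =>
      intro _
      by_cases hp : p ∈ σ <;> simp [fp, hp, atoms]
  | and a b iha ihb =>
      intro h
      simp only [fp, atoms, Set.union_subset_iff] at h ⊢
      exact ⟨iha h.1, ihb h.2⟩
  | or a b iha ihb =>
      intro h
      simp only [fp, atoms, Set.union_subset_iff] at h ⊢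
      exact ⟨iha h.1, ihb h.2⟩
  | next a _ =>
      intro h
      have hmem : LTLf.next a ∈ S := h (by simp [atoms])
      simp only [fp, atoms, Set.union_subset_iff]
      constructor
      · exact (atoms_subset_subf a).trans
          ((subf_trans (.next a) a (by simp [subf, mem_subf_self])).trans
            (hclosed _ hmem))
      · exact (atoms_subset_subf _).trans ((subf_trans _ _ (mem_subf_self _)).trans hdt)
  | wnext a _ =>
      intro h
      have hmem : LTLf.wnext a ∈ S := h (by simp [atoms])
      simp only [fp, atoms, Set.union_subset_iff]
      constructor
      · exact (atoms_subset_subf a).trans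
          ((subf_trans (.wnext a) a (by simp [subf, mem_subf_self])).trans
            (hclosed _ hmem))
      · exact (atoms_subset_subf _).trans ((subf_trans _ _ (mem_subf_self _)).trans hbf)
  | until_ a b iha ihb =>
      intro h
      have hmem : LTLf.until_ a b ∈ S := h (by simp [atoms])
      have hsa : atoms a ⊆ S := (atoms_subset_subf a).trans
        ((subf_trans (.until_ a b) a (by simp [subf, mem_subf_self])).trans
          (hclosed _ hmem))
      have hsb : atoms b ⊆ S := (atoms_subset_subf b).trans
        ((subf_trans (.until_ a b) b (by simp [subf, mem_subf_self])).trans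
          (hclosed _ hmem))
      by_cases htt : a = .tt ∧ b = .tt
      · obtain ⟨rfl, rfl⟩ := htt
        simp [fp, atoms]
      · rw [fp_until_ne σ a b htt]
        simp only [atoms, Set.union_subset_iff]
        refine ⟨ihb hsb, iha hsa, ?_, ?_⟩
        · simpa using hmem
        · exact (atoms_subset_subf _).trans ((subf_trans _ _ (mem_subf_self _)).trans hdt)
  | release a b iha ihb =>
      intro h
      have hmem : LTLf.release a b ∈ S := h (by simp [atoms])
      have hsa : atoms a ⊆ S := (atoms_subset_subf a).trans
        ((subf_trans (.release a b) a (by simp [subf, mem_subf_self])).trans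
          (hclosed _ hmem))
      have hsb : atoms b ⊆ S := (atoms_subset_subf b).trans
        ((subf_trans (.release a b) b (by simp [subf, mem_subf_self])).trans
          (hclosed _ hmem))
      by_cases hff : a = .ff ∧ b = .ff
      · obtain ⟨rfl, rfl⟩ := hff
        simp [fp, atoms]
      · rw [fp_release_ne σ a b hff]
        simp only [atoms, Set.union_subset_iff]
        refine ⟨ihb hsb, iha hsa, ?_, ?_⟩
        · simpa using hmem
        · exact (atoms_subset_subf _).trans ((subf_trans _ _ (mem_subf_self _)).trans hbf)

lemma atoms_fpTrace_subset (φ : LTLf P) (u : List (Set P)) :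
    atoms (fpTrace φ u) ⊆ cl φ := by
  suffices h : ∀ (u : List (Set P)) (χ : LTLf P), atoms χ ⊆ cl φ →
      atoms (fpTrace χ u) ⊆ cl φ by
    refine h u φ ?_
    exact (atoms_subset_subf φ).trans (by intro z hz; simp [cl, hz])
  intro u
  induction u with
  | nil => intro χ h; simpa [fpTrace] using h
  | cons σ u ih =>
      intro χ h
      simp only [fpTrace]
      exact ih _ (atoms_fp_subset σ (cl φ) (subf_subset_cl φ) (dt_subset_cl φ)
        (bf_subset_cl φ) χ h)

/-- the states reachable from `φ` by repeated progression, identified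
up to propositional equivalence, number at most `2 ^ 2 ^ |cl(φ)|`. -/
theorem reachable_doubly_exponential (φ : LTLf P) :
    ({C : Set (LTLf P) | ∃ u : List (Set P), C = {ψ | PropEquiv (fpTrace φ u) ψ}}).Finite ∧
    ({C : Set (LTLf P) | ∃ u : List (Set P), C = {ψ | PropEquiv (fpTrace φ u) ψ}}).ncard ≤
      2 ^ 2 ^ (cl φ).ncard := by
  classical
  have hfin : (cl φ).Finite := cl_finite φ
  haveI : Fintype (cl φ) := hfin.fintype
  set S : Set (Set (LTLf P)) :=
    {C : Set (LTLf P) | ∃ u : List (Set P), C = {ψ | PropEquiv (fpTrace φ u) ψ}} with hS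
  -- valuation extension
  let vb : (↥(cl φ) → Bool) → (LTLf P → Prop) :=
    fun b a => ∃ h : a ∈ cl φ, b ⟨a, h⟩ = true
  let F : Set (LTLf P) → Set (↥(cl φ) → Bool) :=
    fun C => {b | ∀ ψ ∈ C, PropEval (vb b) ψ}
  have hF : ∀ (χ : LTLf P), F {ψ | PropEquiv χ ψ} = {b | PropEval (vb b) χ} := by
    intro χ
    ext b
    simp only [F, Set.mem_setOf_eq]
    constructor
    · intro h
      exact h χ (fun v => Iff.rfl)
    · intro h ψ hψ
      exact (hψ (vb b)).mp h
  have hinj : Set.InjOn F S := by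
    rintro C1 ⟨u1, rfl⟩ C2 ⟨u2, rfl⟩ hFC
    set χ1 := fpTrace φ u1
    set χ2 := fpTrace φ u2
    rw [hF χ1, hF χ2] at hFC
    have hequiv : PropEquiv χ1 χ2 := by
      intro v
      set b : ↥(cl φ) → Bool := fun a => if v a.1 then true else false with hb
      have hvb : ∀ a ∈ cl φ, vb b a ↔ v a := by
        intro a ha
        simp only [vb, hb]
        constructor
        · rintro ⟨h, hh⟩
          by_contra hv
          simp [hv] at hh
        · intro hv
          exact ⟨ha, by simp [hv]⟩
      have h1 : PropEval v χ1 ↔ PropEval (vb b) χ1 := by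
        refine propEval_congr v (vb b) χ1 fun a ha => ?_
        exact (hvb a (atoms_fpTrace_subset φ u1 ha)).symm
      have h2 : PropEval v χ2 ↔ PropEval (vb b) χ2 := by
        refine propEval_congr v (vb b) χ2 fun a ha => ?_
        exact (hvb a (atoms_fpTrace_subset φ u2 ha)).symm
      rw [h1, h2]
      have := Set.ext_iff.mp hFC b
      simpa [Set.mem_setOf_eq] using this
    ext ψ
    simp only [Set.mem_setOf_eq]
    constructor
    · intro h v
      exact ((hequiv v).symm.trans (h v))
    · intro h v
      exact ((hequiv v).trans (h v))
  have hTfin : Finite (Set (↥(cl φ) → Bool)) := by infer_instance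
  have hSfin : S.Finite := by
    have himg : (F '' S).Finite := Set.toFinite _
    exact Set.Finite.of_finite_image himg hinj
  refine ⟨hSfin, ?_⟩
  have hcard : S.ncard = (F '' S).ncard := (Set.ncard_image_of_injOn hinj).symm
  rw [hcard]
  have hle : (F '' S).ncard ≤ (Set.univ : Set (Set (↥(cl φ) → Bool))).ncard :=
    Set.ncard_le_ncard (Set.subset_univ _) (Set.toFinite _)
  refine hle.trans ?_
  rw [Set.ncard_univ]
  have hn : Nat.card (cl φ : Set (LTLf P)) = (cl φ).ncard := by
    rw [Nat.card_coe_set_eq]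
  rw [Nat.card_eq_fintype_card, Fintype.card_set, Fintype.card_fun,
    Fintype.card_bool, ← hn, Nat.card_eq_fintype_card]

end LTLfSynth
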